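/- arXiv:1603.07559 — 3 statements merged into one kernel-verified Lean document; each statement's English description precedes it below -/
import Mathlib

section
/- Let b ≥ 1, d = 2^b, and index the d-dimensional Pauli matrices B_1 = I_d, B_2, …, B_{d²}. Let δ_2, …, δ_{d²} be independent real-valued random variables with finite second moments. Then E‖ Σ_{j=2}^{d²} δ_j B_j ‖₂² ≤ Σ_{j=2}^{d²} E[δ_j²] + ( Σ_{j=2}^{d²} E[|δ_j|] )² − Σ_{j=2}^{d²} ( E[|δ_j|] )², where ‖·‖₂ denotes the spectral (operator) norm. -/
open MeasureTheory ProbabilityTheory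

/-- The four 2×2 Pauli matrices: σ₀ = I₂, σ₁, σ₂, σ₃. -/
noncomputable def pauli2 : Fin 4 → Matrix (Fin 2) (Fin 2) ℂ :=
  ![!![1, 0; 0, 1], !![0, 1; 1, 0], !![0, -Complex.I; Complex.I, 0], !![1, 0; 0, -1]]

/-- The `d = 2^b`-dimensional Pauli matrix `σ_{ℓ 1} ⊗ σ_{ℓ 2} ⊗ ⋯ ⊗ σ_{ℓ b}`. -/
noncomputable def PauliTensor {b : ℕ} (ℓ : Fin b → Fin 4) :
    Matrix (Fin b → Fin 2) (Fin b → Fin 2) ℂ :=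
  Matrix.of fun x y => ∏ i, pauli2 (ℓ i) (x i) (y i)

/-- The spectral (operator) norm of a square complex matrix. -/
noncomputable def specNorm {n : Type*} [Fintype n] [DecidableEq n]
    (A : Matrix n n ℂ) : ℝ :=
  ‖Matrix.toEuclideanCLM (𝕜 := ℂ) (n := n) A‖

lemma pauli2_star_mul_self (k : Fin 4) : star (pauli2 k) * pauli2 k = 1 := by
  fin_cases k <;> ext i j <;> fin_cases i <;> fin_cases j <;>
    simp [pauli2, Matrix.mul_apply, Fin.sum_univ_two, Matrix.one_apply, Matrix.star_apply,
      Matrix.conjTranspose_apply, Complex.ext_iff]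

lemma PauliTensor_star_mul_self {b : ℕ} (ℓ : Fin b → Fin 4) :
    star (PauliTensor ℓ) * PauliTensor ℓ = 1 := by
  ext x y
  rw [Matrix.mul_apply]
  calc ∑ z : Fin b → Fin 2, (star (PauliTensor ℓ)) x z * PauliTensor ℓ z y
      = ∑ z : Fin b → Fin 2, ∏ i,
          (star (pauli2 (ℓ i) (z i) (x i)) * pauli2 (ℓ i) (z i) (y i)) := by
        refine Finset.sum_congr rfl fun z _ => ?_
        simp [PauliTensor, Matrix.star_apply, Matrix.conjTranspose_apply, star_prod,
          Finset.prod_mul_distrib]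
    _ = ∏ i, ∑ w : Fin 2, star (pauli2 (ℓ i) w (x i)) * pauli2 (ℓ i) w (y i) := by
        rw [Finset.prod_univ_sum]
        simp
    _ = ∏ i, (1 : Matrix (Fin 2) (Fin 2) ℂ) (x i) (y i) := by
        refine Finset.prod_congr rfl fun i _ => ?_
        have h := congrFun (congrFun (pauli2_star_mul_self (ℓ i)) (x i)) (y i)
        rw [← h, Matrix.mul_apply]
        refine Finset.sum_congr rfl fun w _ => ?_
        simp [Matrix.star_apply, Matrix.conjTranspose_apply]
    _ = (1 : Matrix (Fin b → Fin 2) (Fin b → Fin 2) ℂ) x y := by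
        by_cases hxy : x = y
        · subst hxy; simp [Matrix.one_apply]
        · obtain ⟨i, hi⟩ := Function.ne_iff.mp hxy
          rw [Matrix.one_apply_ne hxy]
          exact Finset.prod_eq_zero (Finset.mem_univ i) (Matrix.one_apply_ne hi)

lemma specNorm_PauliTensor_le {b : ℕ} (ℓ : Fin b → Fin 4) :
    specNorm (PauliTensor ℓ) ≤ 1 := by
  set T := Matrix.toEuclideanCLM (𝕜 := ℂ) (PauliTensor ℓ) with hT
  have h2 : star T * T = 1 := by
    rw [hT, ← map_star, ← map_mul, PauliTensor_star_mul_self, map_one]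
  have h3 := CStarRing.norm_star_mul_self (x := T)
  rw [h2] at h3
  have h4 : ‖(1 : EuclideanSpace ℂ (Fin b → Fin 2) →L[ℂ] EuclideanSpace ℂ (Fin b → Fin 2))‖ ≤ 1 := by
    rw [ContinuousLinearMap.one_def]; exact ContinuousLinearMap.norm_id_le
  have h5 : (0:ℝ) ≤ ‖T‖ := norm_nonneg _
  show ‖T‖ ≤ 1
  nlinarith

set_option maxHeartbeats 2000000 in
set_option synthInstance.maxHeartbeats 400000 in
lemma specNorm_sum_smul_le {n : Type*} [Fintype n] [DecidableEq n] {ι : Type*} [Fintype ι]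
    (c : ι → ℝ) (A : ι → Matrix n n ℂ) (hA : ∀ j, specNorm (A j) ≤ 1) :
    specNorm (∑ j : ι, ((c j : ℝ) : ℂ) • A j) ≤ ∑ j : ι, |c j| := by
  unfold specNorm
  have hs : Matrix.toEuclideanCLM (𝕜 := ℂ) (∑ j : ι, ((c j : ℝ) : ℂ) • A j)
      = ∑ j : ι, ((c j : ℝ) : ℂ) • Matrix.toEuclideanCLM (𝕜 := ℂ) (A j) := by
    rw [map_sum]
    exact Finset.sum_congr rfl fun j _ => _root_.map_smul _ _ _
  rw [hs]
  refine (norm_sum_le _ _).trans (Finset.sum_le_sum fun j _ => ?_)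
  have h2 : ‖((c j : ℝ) : ℂ) • Matrix.toEuclideanCLM (𝕜 := ℂ) (A j)‖
      = ‖((c j : ℝ) : ℂ)‖ * ‖Matrix.toEuclideanCLM (𝕜 := ℂ) (A j)‖ :=
    norm_smul (β := EuclideanSpace ℂ n →L[ℂ] EuclideanSpace ℂ n) ((c j : ℝ) : ℂ) (Matrix.toEuclideanCLM (𝕜 := ℂ) (A j))
  have h1 : ‖(((c j : ℝ)) : ℂ)‖ = |c j| := by
    rw [Complex.norm_real, Real.norm_eq_abs]
  rw [h2, h1]
  calc |c j| * ‖Matrix.toEuclideanCLM (𝕜 := ℂ) (A j)‖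
      ≤ |c j| * 1 := mul_le_mul_of_nonneg_left (hA j) (abs_nonneg _)
    _ = |c j| := mul_one _

lemma specNorm_nonneg {n : Type*} [Fintype n] [DecidableEq n] (A : Matrix n n ℂ) :
    0 ≤ specNorm A := norm_nonneg _

set_option maxHeartbeats 2000000 in
set_option synthInstance.maxHeartbeats 400000 in
/-- if `δ_j`, `j = 2, …, d²` (indexed by the non-identity Pauli
multi-indices), are independent real random variables with finite second moments,
then `E‖Σ_j δ_j B_j‖₂² ≤ Σ_j E[δ_j²] + (Σ_j E|δ_j|)² − Σ_j (E|δ_j|)²`. -/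
theorem pauli_random_combination_spectral_moment (b : ℕ) (hb : 1 ≤ b)
    {Ω : Type*} [MeasureSpace Ω] (hprob : IsProbabilityMeasure (volume : Measure Ω))
    (δ : {ℓ : Fin b → Fin 4 // ℓ ≠ fun _ => 0} → Ω → ℝ)
    (hmeas : ∀ j, Measurable (δ j))
    (hindep : iIndepFun δ (volume : Measure Ω))
    (hL2 : ∀ j, MemLp (δ j) 2 (volume : Measure Ω)) :
    (∫ ω, (specNorm (∑ j : {ℓ : Fin b → Fin 4 // ℓ ≠ fun _ => 0},
          ((δ j ω : ℝ) : ℂ) • PauliTensor j.1)) ^ 2)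
      ≤ (∑ j : {ℓ : Fin b → Fin 4 // ℓ ≠ fun _ => 0}, ∫ ω, (δ j ω) ^ 2) +
        (∑ j : {ℓ : Fin b → Fin 4 // ℓ ≠ fun _ => 0}, ∫ ω, |δ j ω|) ^ 2 -
        ∑ j : {ℓ : Fin b → Fin 4 // ℓ ≠ fun _ => 0}, (∫ ω, |δ j ω|) ^ 2 := by
  classical
  letI J := {ℓ : Fin b → Fin 4 // ℓ ≠ fun _ => 0}
  have hbound : ∀ ω, specNorm (∑ j : J, ((δ j ω : ℝ) : ℂ) • PauliTensor j.1)
      ≤ ∑ j : J, |δ j ω| := fun ω =>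
    specNorm_sum_smul_le (fun j : J => δ j ω) (fun j : J => PauliTensor j.1)
      (fun j => specNorm_PauliTensor_le j.1)
  -- integrability
  have habs : ∀ j : J, Integrable (fun ω => |δ j ω|) volume :=
    fun j => ((hL2 j).integrable one_le_two).abs
  have hsq : ∀ j : J, Integrable (fun ω => δ j ω ^ 2) volume :=
    fun j => (memLp_two_iff_integrable_sq (hmeas j).aestronglyMeasurable).mp (hL2 j)
  have hmul : ∀ j k : J, Integrable (fun ω => |δ j ω| * |δ k ω|) volume := by
    intro j k
    by_cases hjk : j = k
    · subst hjk
      have : (fun ω => |δ j ω| * |δ j ω|) = fun ω => δ j ω ^ 2 := by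
        funext ω; rw [abs_mul_abs_self, sq]
      rw [this]; exact hsq j
    · have hind : IndepFun (fun ω => |δ j ω|) (fun ω => |δ k ω|) volume :=
        (hindep.indepFun hjk).comp measurable_abs measurable_abs
      exact hind.integrable_mul (habs j) (habs k)
  have hsumInt : Integrable (fun ω => (∑ j : J, |δ j ω|) ^ 2) volume := by
    have h : (fun ω => (∑ j : J, |δ j ω|) ^ 2)
        = fun ω => ∑ j : J, ∑ k : J, |δ j ω| * |δ k ω| := by
      funext ω; rw [sq, Finset.sum_mul_sum]
    rw [h]
    exact integrable_finset_sum _ fun j _ =>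
      integrable_finset_sum _ fun k _ => hmul j k
  -- monotonicity step
  have hmono : (∫ ω, (specNorm (∑ j : J, ((δ j ω : ℝ) : ℂ) • PauliTensor j.1)) ^ 2)
      ≤ ∫ ω, (∑ j : J, |δ j ω|) ^ 2 := by
    refine integral_mono_of_nonneg (ae_of_all _ fun ω => sq_nonneg _) hsumInt
      (ae_of_all _ fun ω => ?_)
    exact pow_le_pow_left₀ (specNorm_nonneg _) (hbound ω) 2
  refine hmono.trans (le_of_eq ?_)
  -- expand the square of the sum
  have hEq : (∫ ω, (∑ j : J, |δ j ω|) ^ 2)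
      = ∑ j : J, ∑ k : J, ∫ ω, |δ j ω| * |δ k ω| := by
    have h : (fun ω => (∑ j : J, |δ j ω|) ^ 2)
        = fun ω => ∑ j : J, ∑ k : J, |δ j ω| * |δ k ω| := by
      funext ω; rw [sq, Finset.sum_mul_sum]
    rw [h, integral_finset_sum _ (fun j _ =>
      integrable_finset_sum _ fun k _ => hmul j k)]
    exact Finset.sum_congr rfl fun j _ => integral_finset_sum _ fun k _ => hmul j k
  have hterm : ∀ j k : J, (∫ ω, |δ j ω| * |δ k ω|)
      = (∫ ω, |δ j ω|) * (∫ ω, |δ k ω|)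
        + (if j = k then (∫ ω, (δ j ω) ^ 2) - (∫ ω, |δ j ω|) ^ 2 else 0) := by
    intro j k
    by_cases hjk : j = k
    · subst hjk
      have h : (∫ ω, |δ j ω| * |δ j ω|) = ∫ ω, (δ j ω) ^ 2 := by
        congr 1; funext ω; rw [abs_mul_abs_self, sq]
      rw [h, if_pos rfl]; ring
    · have hind : IndepFun (fun ω => |δ j ω|) (fun ω => |δ k ω|) volume :=
        (hindep.indepFun hjk).comp measurable_abs measurable_abs
      rw [if_neg hjk, add_zero]
      exact ProbabilityTheory.IndepFun.integral_fun_mul_eq_mul_integral hind (habs j).aestronglyMeasurable (habs k).aestronglyMeasurable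
  rw [hEq]
  simp_rw [hterm]
  rw [Finset.sum_congr rfl (fun j _ => Finset.sum_add_distrib), Finset.sum_add_distrib]
  have h1 : ∑ j : J, ∑ k : J, (∫ ω, |δ j ω|) * (∫ ω, |δ k ω|)
      = (∑ j : J, ∫ ω, |δ j ω|) ^ 2 := by
    rw [sq, Finset.sum_mul_sum]
  have h2 : ∑ j : J, ∑ k : J,
      (if j = k then (∫ ω, (δ j ω) ^ 2) - (∫ ω, |δ j ω|) ^ 2 else 0)
      = ∑ j : J, ((∫ ω, (δ j ω) ^ 2) - (∫ ω, |δ j ω|) ^ 2) := by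
    refine Finset.sum_congr rfl fun j _ => ?_
    exact (Finset.sum_ite_eq Finset.univ j _).trans (if_pos (Finset.mem_univ j))
  rw [h1, h2, Finset.sum_sub_distrib]
  ring
end

section
/- Fix constants 0 ≤ q < 1, ħ > 1, c₀ > 0 and c₁ < 1. There exist constants C₁, C₂ > 0 and n₀ (depending only on q, ħ, c₀, c₁) such that the following holds for all n ≥ n₀ and all d = 2^b with n^{c₀} ≤ d ≤ exp(n^{c₁}): if β_2, …, β_{d²} ∈ [−1, 1] satisfy Σ_{j=2}^{d²} |β_j|^q ≤ π_n(d), if N_2, …, N_{d²} are independent with n(N_j + 1)/2 ~ Binomial(n, (1 + β_j)/2), and if β̂_j = N_j · 1(|N_j| ≥ ϖ) with threshold ϖ = ħ √((4/n) log d), then Σ_{j=2}^{d²} E|β̂_j − β_j| ≤ C₁ π_n(d) ϖ^{1−q} and Σ_{j=2}^{d²} E[|β̂_j − β_j|²] ≤ C₂ π_n(d) ϖ^{2−q}. -/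
open MeasureTheory ProbabilityTheory

/-- The law of the average `N = 2X/n − 1` of `n` Pauli measurements, where
`X ~ Binomial(n, p)`; it is the discrete measure on `ℝ` assigning mass
`C(n,l) p^l (1−p)^{n−l}` to the point `2l/n − 1`, `l = 0, 1, …, n`. -/
noncomputable def binAvgLaw (n : ℕ) (p : ℝ) : Measure ℝ :=
  ∑ l ∈ Finset.range (n + 1),
    (ENNReal.ofReal ((n.choose l : ℝ) * p ^ l * (1 - p) ^ (n - l))) •
      Measure.dirac (2 * (l : ℝ) / n - 1)

section AuxLemmas
open Real Finset

noncomputable def binW (n l : ℕ) (p : ℝ) : ℝ := (n.choose l : ℝ) * p ^ l * (1 - p) ^ (n - l)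

lemma bern_mgf_le (p : ℝ) (hp0 : 0 ≤ p) (hp1 : p ≤ 1) (s : ℝ) :
    p * exp (s * (1 - p)) + (1 - p) * exp (-(s * p)) ≤ exp (s ^ 2 / 8) := by
  set h : ℝ → ℝ := fun t => p * exp t + (1 - p) with hh
  have hpos : ∀ t, 0 < h t := by
    intro t
    rcases lt_or_eq_of_le hp1 with h1 | h1
    · have : 0 < 1 - p := by linarith
      positivity
    · simp [hh, ← h1]; positivity
  -- main inequality : log (h s) ≤ s^2/8 + s*p
  set g : ℝ → ℝ := fun t => t ^ 2 / 8 + t * p - Real.log (h t) with hg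
  set G : ℝ → ℝ := fun t => t / 4 + p - p * exp t / h t with hG
  have hderivh : ∀ t, HasDerivAt h (p * exp t) t := by
    intro t
    exact (((Real.hasDerivAt_exp t).const_mul p).add_const (1 - p))
  have hderivg : ∀ t, HasDerivAt g (G t) t := by
    intro t
    have h1 : HasDerivAt (fun t : ℝ => t ^ 2 / 8 + t * p) (t / 4 + p) t := by
      have := ((hasDerivAt_pow 2 t).div_const 8).add ((hasDerivAt_id t).mul_const p)
      exact this.congr_deriv (by push_cast; ring)
    have h2 : HasDerivAt (fun t => Real.log (h t)) (p * exp t / h t) t :=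
      (hderivh t).log (ne_of_gt (hpos t))
    exact h1.sub h2
  have hderivG : ∀ t, HasDerivAt G (1 / 4 - p * exp t * (1 - p) / (h t) ^ 2) t := by
    intro t
    have h1 : HasDerivAt (fun t : ℝ => t / 4 + p) (1 / 4) t := by
      simpa using ((hasDerivAt_id t).div_const 4).add_const p
    have h2 : HasDerivAt (fun t => p * exp t / h t)
        ((p * exp t * h t - p * exp t * (p * exp t)) / (h t) ^ 2) t :=
      ((Real.hasDerivAt_exp t).const_mul p).div (hderivh t) (ne_of_gt (hpos t))
    have := h1.sub h2
    refine this.congr_deriv ?_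
    have : h t = p * exp t + (1 - p) := rfl
    rw [this]
    ring
  have hGnonneg : ∀ t, 0 ≤ deriv G t := by
    intro t
    rw [(hderivG t).deriv]
    have hb : 4 * (p * exp t * (1 - p)) ≤ (h t) ^ 2 := by
      have : (h t) ^ 2 - 4 * (p * exp t * (1 - p)) = (p * exp t - (1 - p)) ^ 2 := by
        simp only [hh]; ring
      nlinarith [sq_nonneg (p * exp t - (1 - p))]
    have h2 : p * exp t * (1 - p) / (h t) ^ 2 ≤ 1 / 4 := by
      rw [div_le_div_iff₀ (pow_pos (hpos t) 2) (by norm_num)]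
      linarith
    linarith
  have hGmono : Monotone G :=
    monotone_of_deriv_nonneg (fun t => (hderivG t).differentiableAt) hGnonneg
  have hG0 : G 0 = 0 := by
    simp [hG, hh]
  have hgdiff : Differentiable ℝ g := fun t => (hderivg t).differentiableAt
  have hg0 : g 0 = 0 := by
    simp [hg, hh]
  have key : ∀ t, 0 ≤ g t := by
    intro t
    rcases le_total 0 t with ht | ht
    · have hmono : MonotoneOn g (Set.Ici (0:ℝ)) := by
        apply monotoneOn_of_deriv_nonneg (convex_Ici 0) hgdiff.continuous.continuousOn
          (hgdiff.differentiableOn)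
        intro x hx
        rw [(hderivg x).deriv]
        have : (0:ℝ) ≤ x := le_of_lt (by simpa using hx)
        have := hGmono this
        rw [hG0] at this
        linarith
      have := hmono (Set.mem_Ici.mpr le_rfl) (Set.mem_Ici.mpr ht) ht
      rw [hg0] at this; exact this
    · have hanti : AntitoneOn g (Set.Iic (0:ℝ)) := by
        apply antitoneOn_of_deriv_nonpos (convex_Iic 0) hgdiff.continuous.continuousOn
          (hgdiff.differentiableOn)
        intro x hx
        rw [(hderivg x).deriv]
        have hx0 : x ≤ (0:ℝ) := le_of_lt (by simpa using hx)
        have := hGmono hx0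
        rw [hG0] at this
        linarith
      have := hanti (Set.mem_Iic.mpr ht) (Set.mem_Iic.mpr le_rfl) ht
      rw [hg0] at this; exact this
  -- conclude
  have hlog : Real.log (h s) ≤ s ^ 2 / 8 + s * p := by
    have := key s
    simp only [hg] at this
    linarith
  have hhs : h s ≤ exp (s ^ 2 / 8 + s * p) := by
    calc h s = exp (Real.log (h s)) := (Real.exp_log (hpos s)).symm
    _ ≤ _ := exp_le_exp.mpr hlog
  have : p * exp (s * (1 - p)) + (1 - p) * exp (-(s * p)) = exp (-(s * p)) * h s := by
    simp only [hh]
    rw [mul_add, ← mul_assoc, mul_comm (exp (-(s*p))) p, mul_assoc, ← Real.exp_add]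
    ring_nf
  rw [this]
  calc exp (-(s * p)) * h s ≤ exp (-(s * p)) * exp (s ^ 2 / 8 + s * p) := by
        exact mul_le_mul_of_nonneg_left hhs (le_of_lt (exp_pos _))
  _ = exp (s ^ 2 / 8) := by rw [← Real.exp_add]; ring_nf

lemma binW_nonneg {p : ℝ} (hp0 : 0 ≤ p) (hp1 : p ≤ 1) (n l : ℕ) : 0 ≤ binW n l p := by
  have h1 : (0:ℝ) ≤ 1 - p := by linarith
  unfold binW; positivity

lemma binW_exp_sum (n : ℕ) (p c : ℝ) :
    ∑ l ∈ range (n + 1), binW n l p * exp (c * l) = (p * exp c + (1 - p)) ^ n := by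
  rw [add_pow]
  apply Finset.sum_congr rfl
  intro l hl
  unfold binW
  rw [mul_pow, ← Real.exp_nat_mul]
  ring_nf

lemma binW_sum (n : ℕ) (p : ℝ) : ∑ l ∈ range (n + 1), binW n l p = 1 := by
  have := binW_exp_sum n p 0
  simpa using this

lemma binW_mgf_le (n : ℕ) (hn : 1 ≤ n) {p : ℝ} (hp0 : 0 ≤ p) (hp1 : p ≤ 1) (lam : ℝ) :
    ∑ l ∈ range (n + 1), binW n l p * exp (lam * (2 * l / n - 1 - (2 * p - 1)))
      ≤ exp (lam ^ 2 / (2 * n)) := by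
  have hn0 : (0:ℝ) < n := by exact_mod_cast hn
  set s : ℝ := 2 * lam / n with hs
  have h1 : ∀ l : ℕ, lam * (2 * l / n - 1 - (2 * p - 1)) = s * l + (-(2 * lam * p)) := by
    intro l; rw [hs]; field_simp; ring
  have h2 : ∑ l ∈ range (n + 1), binW n l p * exp (lam * (2 * l / n - 1 - (2 * p - 1)))
      = exp (-(2 * lam * p)) * (p * exp s + (1 - p)) ^ n := by
    rw [← binW_exp_sum n p s, Finset.mul_sum]
    apply Finset.sum_congr rfl
    intro l _
    rw [h1 l, Real.exp_add]
    ring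
  rw [h2]
  have h3 : exp (-(2 * lam * p)) * (p * exp s + (1 - p)) ^ n
      = (p * exp (s * (1 - p)) + (1 - p) * exp (-(s * p))) ^ n := by
    have hnp : -(2 * lam * p) = (n : ℝ) * (-(s * p)) := by rw [hs]; field_simp
    rw [hnp, Real.exp_nat_mul, ← mul_pow]
    congr 1
    rw [mul_add, mul_comm (exp (-(s*p))) (p * exp s), mul_assoc, ← Real.exp_add]
    ring_nf
  rw [h3]
  have h4 : (p * exp (s * (1 - p)) + (1 - p) * exp (-(s * p))) ^ n ≤ (exp (s ^ 2 / 8)) ^ n := by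
    apply pow_le_pow_left₀ _ (bern_mgf_le p hp0 hp1 s)
    have e1 : (0:ℝ) ≤ p * exp (s * (1 - p)) := by positivity
    have e2 : (0:ℝ) ≤ (1 - p) * exp (-(s * p)) := by
      have : (0:ℝ) ≤ 1 - p := by linarith
      positivity
    linarith
  refine h4.trans (le_of_eq ?_)
  rw [← Real.exp_nat_mul]
  congr 1
  rw [hs]; field_simp; ring

lemma pow_le_exp_aux {a t lam : ℝ} (ha : 0 < a) (hat : a ≤ t) (k : ℕ)
    (hk : (k : ℝ) ≤ lam * a) : t ^ k ≤ a ^ k * exp (lam * (t - a)) := by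
  have h1 : t / a ≤ exp ((t - a) / a) := by
    have e1 := Real.add_one_le_exp ((t - a) / a)
    have e2 : (t - a) / a + 1 = t / a := by field_simp; ring
    linarith
  have h2 : (t / a) ^ k ≤ exp ((k : ℝ) * ((t - a) / a)) := by
    calc (t / a) ^ k ≤ (exp ((t - a) / a)) ^ k := by
          apply pow_le_pow_left₀ (div_nonneg (ha.le.trans hat) ha.le) h1
    _ = exp ((k : ℝ) * ((t - a) / a)) := by rw [← Real.exp_nat_mul]
  have h3 : (k : ℝ) * ((t - a) / a) ≤ lam * (t - a) := by
    have hk' : (k:ℝ)/a ≤ lam := (div_le_iff₀ ha).mpr hk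
    have e : (k : ℝ) * ((t - a) / a) = ((k:ℝ)/a) * (t - a) := by ring
    rw [e]
    exact mul_le_mul_of_nonneg_right hk' (by linarith)
  have h4 : t ^ k = a ^ k * (t/a) ^ k := by
    rw [div_pow]; field_simp
  rw [h4]
  exact mul_le_mul_of_nonneg_left (h2.trans (exp_le_exp.mpr h3)) (pow_nonneg ha.le k)

lemma sum_trunc {ι : Type*} (s : Finset ι) (w y : ι → ℝ) (hw : ∀ i ∈ s, 0 ≤ w i)
    {a lam M : ℝ} (ha : 0 < a) (k : ℕ) (hk : (k : ℝ) ≤ lam * a)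
    (hmgf : ∑ i ∈ s, w i * exp (lam * y i) ≤ M) :
    ∑ i ∈ s, (if a ≤ y i then w i * y i ^ k else 0)
      ≤ a ^ k * exp (-(lam * a)) * M := by
  have step : ∑ i ∈ s, (if a ≤ y i then w i * y i ^ k else 0)
      ≤ ∑ i ∈ s, a ^ k * exp (-(lam * a)) * (w i * exp (lam * y i)) := by
    apply Finset.sum_le_sum
    intro i hi
    have hwi := hw i hi
    by_cases h : a ≤ y i
    · rw [if_pos h]
      have hkey := pow_le_exp_aux ha h k hk
      have e : exp (lam * (y i - a)) = exp (lam * y i) * exp (-(lam * a)) := by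
        rw [← Real.exp_add]; ring_nf
      calc w i * y i ^ k ≤ w i * (a ^ k * exp (lam * (y i - a))) :=
            mul_le_mul_of_nonneg_left hkey hwi
      _ = a ^ k * exp (-(lam * a)) * (w i * exp (lam * y i)) := by rw [e]; ring
    · rw [if_neg h]; positivity
  refine step.trans ?_
  rw [← Finset.mul_sum]
  apply mul_le_mul_of_nonneg_left hmgf (by positivity)

lemma binW_abs_tail (n : ℕ) (hn : 1 ≤ n) {p : ℝ} (hp0 : 0 ≤ p) (hp1 : p ≤ 1)
    {a : ℝ} (ha : 0 < a) (hna : 2 ≤ (n : ℝ) * a ^ 2) (k : ℕ) (hk : k ≤ 2) :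
    ∑ l ∈ range (n + 1),
      (if a ≤ |2 * (l:ℝ) / n - 1 - (2 * p - 1)| then
        binW n l p * |2 * (l:ℝ) / n - 1 - (2 * p - 1)| ^ k else 0)
      ≤ 2 * a ^ k * exp (-((n : ℝ) * a ^ 2 / 2)) := by
  have hn0 : (0:ℝ) < n := by exact_mod_cast hn
  set y : ℕ → ℝ := fun l => 2 * (l:ℝ) / n - 1 - (2 * p - 1) with hy
  have hw : ∀ l ∈ range (n+1), 0 ≤ binW n l p := fun l _ => binW_nonneg hp0 hp1 n l
  have hka : (k : ℝ) ≤ ((n:ℝ) * a) * a := by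
    have : (k:ℝ) ≤ 2 := by exact_mod_cast hk
    nlinarith
  have hb : a ^ k * exp (-(((n:ℝ) * a) * a)) * exp (((n:ℝ) * a) ^ 2 / (2 * n))
      = a ^ k * exp (-((n : ℝ) * a ^ 2 / 2)) := by
    rw [mul_assoc, ← Real.exp_add]
    congr 2
    field_simp
    ring
  have t1 : ∑ l ∈ range (n+1), (if a ≤ y l then binW n l p * (y l) ^ k else 0)
      ≤ a ^ k * exp (-((n : ℝ) * a ^ 2 / 2)) := by
    have := sum_trunc (range (n+1)) (fun l => binW n l p) y hw ha k hka
      (binW_mgf_le n hn hp0 hp1 ((n:ℝ) * a))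
    rw [hb] at this
    exact this
  have t2 : ∑ l ∈ range (n+1), (if a ≤ -(y l) then binW n l p * (-(y l)) ^ k else 0)
      ≤ a ^ k * exp (-((n : ℝ) * a ^ 2 / 2)) := by
    have hmgf2 : ∑ l ∈ range (n+1), binW n l p * exp (((n:ℝ) * a) * (-(y l)))
        ≤ exp (((n:ℝ) * a) ^ 2 / (2 * n)) := by
      have := binW_mgf_le n hn hp0 hp1 (-((n:ℝ) * a))
      have e : ∀ l ∈ range (n+1), binW n l p * exp (((n:ℝ) * a) * (-(y l)))
          = binW n l p * exp ((-((n:ℝ) * a)) * (y l)) := by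
        intro l _; congr 1; ring_nf
      rw [Finset.sum_congr rfl e]
      refine this.trans (le_of_eq ?_)
      congr 1; ring
    have := sum_trunc (range (n+1)) (fun l => binW n l p) (fun l => -(y l)) hw ha k hka hmgf2
    rw [hb] at this
    exact this
  have split : ∑ l ∈ range (n+1), (if a ≤ |y l| then binW n l p * |y l| ^ k else 0)
      ≤ (∑ l ∈ range (n+1), (if a ≤ y l then binW n l p * (y l) ^ k else 0))
        + ∑ l ∈ range (n+1), (if a ≤ -(y l) then binW n l p * (-(y l)) ^ k else 0) := by
    rw [← Finset.sum_add_distrib]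
    apply Finset.sum_le_sum
    intro l hl
    have hwl := hw l hl
    by_cases habs : a ≤ |y l|
    · rw [if_pos habs]
      rcases abs_cases (y l) with ⟨he, hs⟩ | ⟨he, hs⟩
      · rw [he] at habs ⊢
        rw [if_pos habs, if_neg (by linarith)]
        simp
      · rw [he] at habs ⊢
        rw [if_neg (by linarith), if_pos habs]
        simp
    · rw [if_neg habs]
      have h1 : (0:ℝ) ≤ (if a ≤ y l then binW n l p * (y l) ^ k else 0) := by
        split_ifs with h
        · have hy0 : (0:ℝ) ≤ y l := le_trans ha.le h
          positivity
        · exact le_refl _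
      have h2 : (0:ℝ) ≤ (if a ≤ -(y l) then binW n l p * (-(y l)) ^ k else 0) := by
        split_ifs with h
        · have hy0 : (0:ℝ) ≤ -(y l) := le_trans ha.le h
          positivity
        · exact le_refl _
      linarith
  have final : ∑ l ∈ range (n+1), (if a ≤ |y l| then binW n l p * |y l| ^ k else 0)
      ≤ 2 * a ^ k * exp (-((n : ℝ) * a ^ 2 / 2)) := split.trans (by linarith)
  exact final

lemma integral_binAvgLaw (n : ℕ) {p : ℝ} (hp0 : 0 ≤ p) (hp1 : p ≤ 1)
    (f : ℝ → ℝ) (hf : Measurable f) :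
    ∫ x, f x ∂(binAvgLaw n p) = ∑ l ∈ range (n+1), binW n l p * f (2 * (l:ℝ) / n - 1) := by
  unfold binAvgLaw
  rw [integral_finset_sum_measure (fun l _ => ?_)]
  · apply Finset.sum_congr rfl
    intro l hl
    rw [integral_smul_measure, integral_dirac f _]
    rw [ENNReal.toReal_ofReal]
    · rfl
    · have h1 : (0:ℝ) ≤ 1 - p := by linarith
      positivity
  · -- integrability
    refine Integrable.smul_measure ?_ ENNReal.ofReal_ne_top
    constructor
    · exact hf.aestronglyMeasurable
    · rw [hasFiniteIntegral_iff_norm]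
      rw [MeasureTheory.lintegral_dirac]
      exact ENNReal.ofReal_lt_top

lemma aux_exp_quad (u : ℝ) (hu : 0 ≤ u) : u * exp (-(u^2/8)) ≤ 2 := by
  rcases le_total u 2 with h | h
  · have : exp (-(u^2/8)) ≤ 1 := by
      rw [Real.exp_le_one_iff]
      simp only [neg_nonpos]
      positivity
    nlinarith [Real.exp_pos (-(u^2/8))]
  · have h1 : exp (-(u^2/8)) ≤ exp (-(u/4)) := by
      apply Real.exp_le_exp.mpr
      nlinarith
    have h2 : u / 2 ≤ exp (u/4) := by
      have e1 := Real.add_one_le_exp (u/8)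
      have e2 : (u/8 + 1)^2 ≤ (exp (u/8))^2 := by
        apply pow_le_pow_left₀ (by linarith) e1
      have e3 : (exp (u/8))^2 = exp (u/4) := by
        rw [sq, ← Real.exp_add]; ring_nf
      nlinarith [sq_nonneg (1 - u/8)]
    have h3 : u * exp (-(u/4)) ≤ 2 := by
      rw [Real.exp_neg]
      rw [mul_inv_le_iff₀ (Real.exp_pos _)]
      linarith
    calc u * exp (-(u^2/8)) ≤ u * exp (-(u/4)) :=
          mul_le_mul_of_nonneg_left h1 hu
    _ ≤ 2 := h3

lemma aux_exp_quad2 (u : ℝ) : u^2 * exp (-(u^2/8)) ≤ 8 := by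
  have h := Real.add_one_le_exp (u^2/8)
  rw [Real.exp_neg, mul_inv_le_iff₀ (Real.exp_pos _)]
  nlinarith

lemma unif_bound1 (q hbar β ϖ L : ℝ) (hq0 : 0 ≤ q) (hq1 : q < 1) (hbar1 : 1 < hbar)
    (hϖpos : 0 < ϖ) (hϖ1 : ϖ ≤ 1) :
    (if |β| ≤ ϖ - ϖ/hbar then |β| + 2*ϖ*exp (-(2*L)) else 5*ϖ)
      ≤ (5 * (1 - 1/hbar) ^ (-q)) * (if β = 0 then (0:ℝ) else |β| ^ q) * ϖ ^ (1-q)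
        + 2*ϖ*exp (-(2*L)) := by
  have hbar0 : (0:ℝ) < hbar := by linarith
  set r : ℝ := 1 - 1/hbar with hr
  have hr0 : 0 < r := by
    rw [hr]; have : 1/hbar < 1 := by rw [div_lt_one hbar0]; exact hbar1
    linarith
  have hr1 : r ≤ 1 := by
    rw [hr]; have : 0 < 1/hbar := by positivity
    linarith
  have hK1 : (1:ℝ) ≤ r ^ (-q) :=
    Real.one_le_rpow_of_pos_of_le_one_of_nonpos hr0 hr1 (by linarith)
  have hKpos : (0:ℝ) < r ^ (-q) := Real.rpow_pos_of_pos hr0 (-q)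
  have hrϖ : ϖ - ϖ/hbar = r * ϖ := by rw [hr]; field_simp
  have hϖpow : ϖ ^ q * ϖ ^ (1-q) = ϖ := by
    rw [← Real.rpow_add hϖpos]; norm_num
  have hBpos : 0 ≤ 2*ϖ*exp (-(2*L)) := by positivity
  by_cases hcase : |β| ≤ ϖ - ϖ/hbar
  · rw [if_pos hcase]
    by_cases hβ0 : β = 0
    · rw [if_pos hβ0, hβ0]
      simp
    · rw [if_neg hβ0]
      have hβpos : 0 < |β| := abs_pos.mpr hβ0
      have hβϖ : |β| ≤ ϖ := by
        have : ϖ - ϖ/hbar ≤ ϖ := by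
          have : 0 < ϖ/hbar := by positivity
          linarith
        linarith
      have key : |β| ≤ |β| ^ q * ϖ ^ (1-q) := by
        calc |β| = |β| ^ q * |β| ^ (1-q) := by
              rw [← Real.rpow_add hβpos]; norm_num
        _ ≤ |β| ^ q * ϖ ^ (1-q) := by
              apply mul_le_mul_of_nonneg_left _ (Real.rpow_nonneg (abs_nonneg β) q)
              exact Real.rpow_le_rpow (abs_nonneg β) hβϖ (by linarith)
      have h5 : |β| ^ q * ϖ ^ (1-q) ≤ (5 * r ^ (-q)) * |β| ^ q * ϖ ^ (1-q) := by
        have hfac : (1:ℝ) ≤ 5 * r ^ (-q) := by nlinarith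
        have hnn : 0 ≤ |β| ^ q * ϖ ^ (1-q) :=
          mul_nonneg (Real.rpow_nonneg (abs_nonneg β) q) (Real.rpow_nonneg hϖpos.le _)
        nlinarith
      linarith
  · rw [if_neg hcase]
    push_neg at hcase
    rw [hrϖ] at hcase
    have hβpos : 0 < |β| := lt_trans (by positivity) hcase
    have hβ0 : β ≠ 0 := abs_pos.mp hβpos
    rw [if_neg hβ0]
    have key : ϖ ≤ r ^ (-q) * |β| ^ q * ϖ ^ (1-q) := by
      have h1 : (r * ϖ) ^ q ≤ |β| ^ q :=
        Real.rpow_le_rpow (by positivity) hcase.le hq0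
      have h2 : (r * ϖ) ^ q = r ^ q * ϖ ^ q :=
        Real.mul_rpow hr0.le hϖpos.le
      have hrr : r ^ (-q) * r ^ q = 1 := by
        rw [← Real.rpow_add hr0]; norm_num
      have h3 : r ^ (-q) * (r ^ q * ϖ ^ q) * ϖ ^ (1-q) = ϖ := by
        calc r ^ (-q) * (r ^ q * ϖ ^ q) * ϖ ^ (1-q)
            = (r ^ (-q) * r ^ q) * (ϖ ^ q * ϖ ^ (1-q)) := by ring
        _ = 1 * ϖ := by rw [hrr, hϖpow]
        _ = ϖ := one_mul ϖ
      calc ϖ = r ^ (-q) * (r ^ q * ϖ ^ q) * ϖ ^ (1-q) := h3.symm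
      _ = r ^ (-q) * (r * ϖ) ^ q * ϖ ^ (1-q) := by rw [h2]
      _ ≤ r ^ (-q) * |β| ^ q * ϖ ^ (1-q) := by
          apply mul_le_mul_of_nonneg_right _ (Real.rpow_nonneg hϖpos.le _)
          exact mul_le_mul_of_nonneg_left h1 hKpos.le
    have h5 := mul_le_mul_of_nonneg_left key (by norm_num : (0:ℝ) ≤ 5)
    have he : 5 * (r ^ (-q) * |β| ^ q * ϖ ^ (1-q)) = (5 * r ^ (-q)) * |β| ^ q * ϖ ^ (1-q) := by
      ring
    linarith [hBpos]

lemma unif_bound2 (q hbar β ϖ L : ℝ) (hq0 : 0 ≤ q) (hq1 : q < 1) (hbar1 : 1 < hbar)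
    (hϖpos : 0 < ϖ) (hϖ1 : ϖ ≤ 1) :
    (if |β| ≤ ϖ - ϖ/hbar then β^2 + 2*ϖ^2*exp (-(2*L)) else 7*ϖ^2)
      ≤ (7 * (1 - 1/hbar) ^ (-q)) * (if β = 0 then (0:ℝ) else |β| ^ q) * ϖ ^ (2-q)
        + 2*ϖ^2*exp (-(2*L)) := by
  have hbar0 : (0:ℝ) < hbar := by linarith
  set r : ℝ := 1 - 1/hbar with hr
  have hr0 : 0 < r := by
    rw [hr]; have : 1/hbar < 1 := by rw [div_lt_one hbar0]; exact hbar1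
    linarith
  have hr1 : r ≤ 1 := by
    rw [hr]; have : 0 < 1/hbar := by positivity
    linarith
  have hK1 : (1:ℝ) ≤ r ^ (-q) :=
    Real.one_le_rpow_of_pos_of_le_one_of_nonpos hr0 hr1 (by linarith)
  have hKpos : (0:ℝ) < r ^ (-q) := Real.rpow_pos_of_pos hr0 (-q)
  have hrϖ : ϖ - ϖ/hbar = r * ϖ := by rw [hr]; field_simp
  have h2cast : ((2:ℝ)) = ((2:ℕ):ℝ) := by norm_num
  have hϖpow : ϖ ^ q * ϖ ^ (2-q) = ϖ^2 := by
    rw [← Real.rpow_add hϖpos]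
    norm_num
  have hBpos : 0 ≤ 2*ϖ^2*exp (-(2*L)) := by positivity
  by_cases hcase : |β| ≤ ϖ - ϖ/hbar
  · rw [if_pos hcase]
    by_cases hβ0 : β = 0
    · rw [if_pos hβ0, hβ0]
      simp
    · rw [if_neg hβ0]
      have hβpos : 0 < |β| := abs_pos.mpr hβ0
      have hβϖ : |β| ≤ ϖ := by
        have : 0 < ϖ/hbar := by positivity
        linarith
      have hβ2 : |β| ^ ((2:ℝ)) = β^2 := by
        rw [h2cast, Real.rpow_natCast, sq_abs]
      have key : β^2 ≤ |β| ^ q * ϖ ^ (2-q) := by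
        calc β^2 = |β| ^ q * |β| ^ (2-q) := by
              rw [← Real.rpow_add hβpos]
              norm_num
        _ ≤ |β| ^ q * ϖ ^ (2-q) := by
              apply mul_le_mul_of_nonneg_left _ (Real.rpow_nonneg (abs_nonneg β) q)
              exact Real.rpow_le_rpow (abs_nonneg β) hβϖ (by linarith)
      have h5 : |β| ^ q * ϖ ^ (2-q) ≤ (7 * r ^ (-q)) * |β| ^ q * ϖ ^ (2-q) := by
        have hfac : (1:ℝ) ≤ 7 * r ^ (-q) := by nlinarith
        have hnn : 0 ≤ |β| ^ q * ϖ ^ (2-q) :=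
          mul_nonneg (Real.rpow_nonneg (abs_nonneg β) q) (Real.rpow_nonneg hϖpos.le _)
        nlinarith
      linarith
  · rw [if_neg hcase]
    push_neg at hcase
    rw [hrϖ] at hcase
    have hβpos : 0 < |β| := lt_trans (by positivity) hcase
    have hβ0 : β ≠ 0 := abs_pos.mp hβpos
    rw [if_neg hβ0]
    have key : ϖ^2 ≤ r ^ (-q) * |β| ^ q * ϖ ^ (2-q) := by
      have h1 : (r * ϖ) ^ q ≤ |β| ^ q :=
        Real.rpow_le_rpow (by positivity) hcase.le hq0
      have h2 : (r * ϖ) ^ q = r ^ q * ϖ ^ q :=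
        Real.mul_rpow hr0.le hϖpos.le
      have hrr : r ^ (-q) * r ^ q = 1 := by
        rw [← Real.rpow_add hr0]; norm_num
      have h3 : r ^ (-q) * (r ^ q * ϖ ^ q) * ϖ ^ (2-q) = ϖ^2 := by
        calc r ^ (-q) * (r ^ q * ϖ ^ q) * ϖ ^ (2-q)
            = (r ^ (-q) * r ^ q) * (ϖ ^ q * ϖ ^ (2-q)) := by ring
        _ = 1 * ϖ^2 := by rw [hrr, hϖpow]
        _ = ϖ^2 := one_mul _
      calc ϖ^2 = r ^ (-q) * (r ^ q * ϖ ^ q) * ϖ ^ (2-q) := h3.symm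
      _ = r ^ (-q) * (r * ϖ) ^ q * ϖ ^ (2-q) := by rw [h2]
      _ ≤ r ^ (-q) * |β| ^ q * ϖ ^ (2-q) := by
          apply mul_le_mul_of_nonneg_right _ (Real.rpow_nonneg hϖpos.le _)
          exact mul_le_mul_of_nonneg_left h1 hKpos.le
    have h5 := mul_le_mul_of_nonneg_left key (by norm_num : (0:ℝ) ≤ 7)
    have he : 7 * (r ^ (-q) * |β| ^ q * ϖ ^ (2-q)) = (7 * r ^ (-q)) * |β| ^ q * ϖ ^ (2-q) := by
      ring
    linarith [hBpos]

section PerJ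

variable {n : ℕ} {β ϖ L hbar : ℝ}

-- common context
variable (hn : 1 ≤ n) (hβ : |β| ≤ 1) (hbar1 : 1 < hbar) (hL : 1 ≤ L)
  (hϖ0 : 0 ≤ ϖ) (hϖ1 : ϖ ≤ 1) (hϖsq : ϖ^2 * n = 4 * hbar^2 * L)

include hn hβ hbar1 hL hϖ0 hϖ1 hϖsq

/-- Per-coefficient first-moment bound. -/
lemma perj_one :
    ∑ l ∈ range (n + 1), binW n l ((1 + β)/2) *
        |(if ϖ ≤ |2 * (l:ℝ) / n - 1| then 2 * (l:ℝ) / n - 1 else 0) - β|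
      ≤ (if |β| ≤ ϖ - ϖ/hbar then |β| + 2*ϖ*exp (-(2*L)) else 5*ϖ) := by
  set p : ℝ := (1 + β)/2 with hp
  have hp0 : 0 ≤ p := by rw [hp]; cases abs_le.mp hβ; linarith
  have hp1 : p ≤ 1 := by rw [hp]; cases abs_le.mp hβ; linarith
  have h2p : 2 * p - 1 = β := by rw [hp]; ring
  have hn0 : (0:ℝ) < n := by exact_mod_cast hn
  have hbar0 : (0:ℝ) < hbar := by linarith
  have hϖpos : 0 < ϖ := by
    rcases lt_or_eq_of_le hϖ0 with h | h; · exact h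
    · exfalso; rw [← h] at hϖsq; nlinarith
  have hnϖ : 4 ≤ (n:ℝ) * ϖ^2 := by nlinarith [hϖsq, hbar1, hL]
  have hsqrtn : 0 < Real.sqrt n := Real.sqrt_pos.mpr hn0
  have hϖn2 : 2 / Real.sqrt n ≤ ϖ := by
    rw [div_le_iff₀ hsqrtn]
    have ht2 : (ϖ * Real.sqrt n)^2 = ϖ^2 * n := by rw [mul_pow, Real.sq_sqrt hn0.le]
    nlinarith [ht2, hnϖ, mul_nonneg hϖ0 hsqrtn.le]
  set X : ℕ → ℝ := fun l => 2 * (l:ℝ) / n - 1 with hX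
  set W : ℕ → ℝ := fun l => binW n l p with hW
  have hWn : ∀ l, 0 ≤ W l := fun l => binW_nonneg hp0 hp1 n l
  have hWs : ∑ l ∈ range (n+1), W l = 1 := binW_sum n p
  -- rewrite the summand
  have hsummand : ∀ l, W l * |(if ϖ ≤ |X l| then X l else 0) - β|
      = (if ϖ ≤ |X l| then W l * |X l - β| else 0)
        + (if ϖ ≤ |X l| then 0 else W l * |β|) := by
    intro l
    split_ifs with h
    · simp
    · simp [abs_neg]
  have hsplit : ∑ l ∈ range (n + 1), W l * |(if ϖ ≤ |X l| then X l else 0) - β|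
      = (∑ l ∈ range (n+1), (if ϖ ≤ |X l| then W l * |X l - β| else 0))
        + ∑ l ∈ range (n+1), (if ϖ ≤ |X l| then 0 else W l * |β|) := by
    rw [← Finset.sum_add_distrib]
    exact Finset.sum_congr rfl (fun l _ => hsummand l)
  rw [hsplit]
  -- generic tail facts
  have habs_tail : ∀ a : ℝ, 0 < a → 2 ≤ (n:ℝ) * a^2 → ∀ k : ℕ, k ≤ 2 →
      (∑ l ∈ range (n+1), (if a ≤ |X l - β| then W l * |X l - β| ^ k else 0))
        ≤ 2 * a ^ k * exp (-((n:ℝ) * a^2/2)) := by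
    intro a ha hna k hk
    have := binW_abs_tail n hn hp0 hp1 ha hna k hk
    rw [h2p] at this
    exact this
  by_cases hcase : |β| ≤ ϖ - ϖ/hbar
  · rw [if_pos hcase]
    set a₀ : ℝ := ϖ/hbar with ha₀def
    have ha₀ : 0 < a₀ := by positivity
    have hna₀ : (n:ℝ) * a₀^2 = 4 * L := by
      rw [ha₀def]; field_simp; nlinarith [hϖsq]
    have part1 : (∑ l ∈ range (n+1), (if ϖ ≤ |X l| then W l * |X l - β| else 0))
        ≤ 2*ϖ*exp (-(2*L)) := by
      have step : (∑ l ∈ range (n+1), (if ϖ ≤ |X l| then W l * |X l - β| else 0))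
          ≤ ∑ l ∈ range (n+1), (if a₀ ≤ |X l - β| then W l * |X l - β| ^ 1 else 0) := by
        apply Finset.sum_le_sum
        intro l _
        by_cases h : ϖ ≤ |X l|
        · rw [if_pos h]
          have hyl : a₀ ≤ |X l - β| := by
            have := abs_sub_abs_le_abs_sub (X l) β
            linarith
          rw [if_pos hyl, pow_one]
        · rw [if_neg h]
          split_ifs with h2
          · exact mul_nonneg (hWn l) (by positivity)
          · exact le_refl 0
      refine step.trans ?_
      have := habs_tail a₀ ha₀ (by rw [hna₀]; linarith) 1 (by norm_num)
      have he : (n:ℝ) * a₀^2/2 = 2*L := by rw [hna₀]; ring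
      rw [he] at this
      refine this.trans ?_
      have ha₀ϖ : a₀ ≤ ϖ := div_le_self hϖ0 hbar1.le
      rw [pow_one]
      gcongr
    have part2 : (∑ l ∈ range (n+1), (if ϖ ≤ |X l| then 0 else W l * |β|)) ≤ |β| := by
      have step : (∑ l ∈ range (n+1), (if ϖ ≤ |X l| then 0 else W l * |β|))
          ≤ ∑ l ∈ range (n+1), W l * |β| := by
        apply Finset.sum_le_sum
        intro l _
        split_ifs with h
        · exact mul_nonneg (hWn l) (abs_nonneg β)
        · exact le_refl _
      refine step.trans ?_
      rw [← Finset.sum_mul, hWs, one_mul]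
    linarith only [part1, part2]
  · rw [if_neg hcase]
    have part1 : (∑ l ∈ range (n+1), (if ϖ ≤ |X l| then W l * |X l - β| else 0))
        ≤ 3*ϖ := by
      have step : (∑ l ∈ range (n+1), (if ϖ ≤ |X l| then W l * |X l - β| else 0))
          ≤ (∑ l ∈ range (n+1), (if ϖ ≤ |X l - β| then W l * |X l - β| ^ 1 else 0))
            + ∑ l ∈ range (n+1), ϖ * W l := by
        rw [← Finset.sum_add_distrib]
        apply Finset.sum_le_sum
        intro l _
        have hWl := hWn l
        have t2 : 0 ≤ ϖ * W l := by positivity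
        by_cases h : ϖ ≤ |X l|
        · rw [if_pos h]
          by_cases h2 : ϖ ≤ |X l - β|
          · rw [if_pos h2, pow_one]; linarith
          · rw [if_neg h2]
            push_neg at h2
            have : W l * |X l - β| ≤ ϖ * W l := by
              rw [mul_comm ϖ (W l)]
              exact mul_le_mul_of_nonneg_left h2.le hWl
            linarith
        · rw [if_neg h]
          have t1 : (0:ℝ) ≤ (if ϖ ≤ |X l - β| then W l * |X l - β| ^ 1 else 0) := by
            split_ifs
            · exact mul_nonneg (hWn l) (by positivity)
            · exact le_refl 0
          linarith
      refine step.trans ?_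
      have t1 := habs_tail ϖ hϖpos (by linarith) 1 (by norm_num)
      have t2 : ∑ l ∈ range (n+1), ϖ * W l = ϖ := by
        rw [← Finset.mul_sum, hWs, mul_one]
      have hexple : exp (-((n:ℝ)*ϖ^2/2)) ≤ 1 := by
        rw [Real.exp_le_one_iff]
        have : (0:ℝ) ≤ (n:ℝ)*ϖ^2/2 := by positivity
        linarith
      rw [pow_one] at t1
      have hb : 2 * ϖ * exp (-((n:ℝ)*ϖ^2/2)) ≤ 2 * ϖ * 1 :=
        mul_le_mul_of_nonneg_left hexple (by positivity)
      rw [t2]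
      linarith
    have part2 : (∑ l ∈ range (n+1), (if ϖ ≤ |X l| then 0 else W l * |β|)) ≤ 2*ϖ := by
      by_cases hbig : |β| ≤ 2*ϖ
      · have step : (∑ l ∈ range (n+1), (if ϖ ≤ |X l| then 0 else W l * |β|))
            ≤ ∑ l ∈ range (n+1), W l * (2*ϖ) := by
          apply Finset.sum_le_sum
          intro l _
          have hWl := hWn l
          split_ifs with h
          · exact mul_nonneg hWl (by positivity)
          · exact mul_le_mul_of_nonneg_left hbig hWl
        refine step.trans ?_
        rw [← Finset.sum_mul, hWs, one_mul]
      · push_neg at hbig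
        set am : ℝ := |β| - ϖ with ham
        have ham0 : 0 < am := by rw [ham]; linarith
        have hamϖ : ϖ ≤ am := by rw [ham]; linarith
        have ham2 : ϖ^2 ≤ am^2 := pow_le_pow_left₀ hϖ0 hamϖ 2
        have hnam : 2 ≤ (n:ℝ) * am^2 := by
          have := mul_le_mul_of_nonneg_left ham2 hn0.le
          linarith
        have step : (∑ l ∈ range (n+1), (if ϖ ≤ |X l| then 0 else W l * |β|))
            ≤ |β| * ∑ l ∈ range (n+1), (if am ≤ |X l - β| then W l * |X l - β| ^ 0 else 0) := by
          rw [Finset.mul_sum]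
          apply Finset.sum_le_sum
          intro l _
          have hWl := hWn l
          by_cases h : ϖ ≤ |X l|
          · rw [if_pos h]
            have hnn : (0:ℝ) ≤ (if am ≤ |X l - β| then W l * |X l - β| ^ 0 else 0) := by
              split_ifs
              · exact mul_nonneg hWl (by positivity)
              · exact le_refl 0
            exact mul_nonneg (abs_nonneg β) hnn
          · rw [if_neg h]
            push_neg at h
            have h5 := abs_sub_abs_le_abs_sub β (X l)
            have habsy : |β - X l| = |X l - β| := abs_sub_comm β (X l)
            rw [habsy] at h5
            have hyl : am ≤ |X l - β| := by rw [ham]; linarith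
            rw [if_pos hyl, pow_zero, mul_one, mul_comm (W l) (|β|)]
        refine step.trans ?_
        have t0 := habs_tail am ham0 hnam 0 (by norm_num)
        have hmul : |β| * (∑ l ∈ range (n+1), (if am ≤ |X l - β| then W l * |X l - β| ^ 0 else 0))
            ≤ |β| * (2 * am ^ 0 * exp (-((n:ℝ) * am^2/2))) := by
          apply mul_le_mul_of_nonneg_left t0 (abs_nonneg β)
        refine hmul.trans ?_
        rw [pow_zero, mul_one]
        -- |β| * (2 * exp(-(n am²/2))) ≤ 2 |β| exp(-(n β²/8)) ≤ 4/√n ≤ 2 ϖ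
        have hexp1 : exp (-((n:ℝ) * am^2/2)) ≤ exp (-((n:ℝ) * β^2/8)) := by
          apply Real.exp_le_exp.mpr
          have h1 : |β|/2 ≤ am := by rw [ham]; linarith
          have h2 : (|β|/2)^2 ≤ am^2 := pow_le_pow_left₀ (by positivity) h1 2
          have h3 : β^2/4 ≤ am^2 := by
            have e : (|β|/2)^2 = β^2/4 := by rw [div_pow, sq_abs]; norm_num
            linarith [e ▸ h2]
          have := mul_le_mul_of_nonneg_left h3 hn0.le
          linarith
        set u : ℝ := Real.sqrt n * |β| with hu
        have hu0 : 0 ≤ u := by positivity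
        have hu2 : u^2 = (n:ℝ) * β^2 := by
          rw [hu, mul_pow, Real.sq_sqrt hn0.le, sq_abs]
        have hquad : u * exp (-(u^2/8)) ≤ 2 := aux_exp_quad u hu0
        have hβe : |β| * exp (-((n:ℝ)*β^2/8)) ≤ 2 / Real.sqrt n := by
          rw [le_div_iff₀ hsqrtn]
          calc |β| * exp (-((n:ℝ)*β^2/8)) * Real.sqrt n
              = u * exp (-(u^2/8)) := by rw [hu, hu2]; ring
          _ ≤ 2 := hquad
        calc |β| * (2 * exp (-((n:ℝ) * am^2/2)))
            ≤ |β| * (2 * exp (-((n:ℝ) * β^2/8))) := by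
              apply mul_le_mul_of_nonneg_left _ (abs_nonneg β)
              linarith only [hexp1]
        _ = 2 * (|β| * exp (-((n:ℝ) * β^2/8))) := by ring
        _ ≤ 2 * (2 / Real.sqrt n) := by linarith only [hβe]
        _ ≤ 2 * ϖ := by linarith only [hϖn2]
    linarith only [part1, part2]

/-- Per-coefficient second-moment bound. -/
lemma perj_two :
    ∑ l ∈ range (n + 1), binW n l ((1 + β)/2) *
        ((if ϖ ≤ |2 * (l:ℝ) / n - 1| then 2 * (l:ℝ) / n - 1 else 0) - β)^2
      ≤ (if |β| ≤ ϖ - ϖ/hbar then β^2 + 2*ϖ^2*exp (-(2*L)) else 7*ϖ^2) := by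
  set p : ℝ := (1 + β)/2 with hp
  have hp0 : 0 ≤ p := by rw [hp]; cases abs_le.mp hβ; linarith
  have hp1 : p ≤ 1 := by rw [hp]; cases abs_le.mp hβ; linarith
  have h2p : 2 * p - 1 = β := by rw [hp]; ring
  have hn0 : (0:ℝ) < n := by exact_mod_cast hn
  have hbar0 : (0:ℝ) < hbar := by linarith
  have hϖpos : 0 < ϖ := by
    rcases lt_or_eq_of_le hϖ0 with h | h; · exact h
    · exfalso; rw [← h] at hϖsq; nlinarith
  have hnϖ : 4 ≤ (n:ℝ) * ϖ^2 := by nlinarith [hϖsq, hbar1, hL]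
  set X : ℕ → ℝ := fun l => 2 * (l:ℝ) / n - 1 with hX
  set W : ℕ → ℝ := fun l => binW n l p with hW
  have hWn : ∀ l, 0 ≤ W l := fun l => binW_nonneg hp0 hp1 n l
  have hWs : ∑ l ∈ range (n+1), W l = 1 := binW_sum n p
  have hsummand : ∀ l, W l * ((if ϖ ≤ |X l| then X l else 0) - β)^2
      = (if ϖ ≤ |X l| then W l * |X l - β|^2 else 0)
        + (if ϖ ≤ |X l| then 0 else W l * β^2) := by
    intro l
    split_ifs with h
    · rw [sq_abs]; simp
    · rw [add_comm (0:ℝ)]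
      simp [neg_sq]
  have hsplit : ∑ l ∈ range (n + 1), W l * ((if ϖ ≤ |X l| then X l else 0) - β)^2
      = (∑ l ∈ range (n+1), (if ϖ ≤ |X l| then W l * |X l - β|^2 else 0))
        + ∑ l ∈ range (n+1), (if ϖ ≤ |X l| then 0 else W l * β^2) := by
    rw [← Finset.sum_add_distrib]
    exact Finset.sum_congr rfl (fun l _ => hsummand l)
  rw [hsplit]
  have habs_tail : ∀ a : ℝ, 0 < a → 2 ≤ (n:ℝ) * a^2 → ∀ k : ℕ, k ≤ 2 →
      (∑ l ∈ range (n+1), (if a ≤ |X l - β| then W l * |X l - β| ^ k else 0))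
        ≤ 2 * a ^ k * exp (-((n:ℝ) * a^2/2)) := by
    intro a ha hna k hk
    have := binW_abs_tail n hn hp0 hp1 ha hna k hk
    rw [h2p] at this
    exact this
  by_cases hcase : |β| ≤ ϖ - ϖ/hbar
  · rw [if_pos hcase]
    set a₀ : ℝ := ϖ/hbar with ha₀def
    have ha₀ : 0 < a₀ := by positivity
    have hna₀ : (n:ℝ) * a₀^2 = 4 * L := by
      rw [ha₀def]; field_simp; nlinarith [hϖsq]
    have part1 : (∑ l ∈ range (n+1), (if ϖ ≤ |X l| then W l * |X l - β|^2 else 0))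
        ≤ 2*ϖ^2*exp (-(2*L)) := by
      have step : (∑ l ∈ range (n+1), (if ϖ ≤ |X l| then W l * |X l - β|^2 else 0))
          ≤ ∑ l ∈ range (n+1), (if a₀ ≤ |X l - β| then W l * |X l - β| ^ 2 else 0) := by
        apply Finset.sum_le_sum
        intro l _
        by_cases h : ϖ ≤ |X l|
        · rw [if_pos h]
          have hyl : a₀ ≤ |X l - β| := by
            have := abs_sub_abs_le_abs_sub (X l) β
            linarith
          rw [if_pos hyl]
        · rw [if_neg h]
          split_ifs with h2
          · exact mul_nonneg (hWn l) (by positivity)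
          · exact le_refl 0
      refine step.trans ?_
      have := habs_tail a₀ ha₀ (by rw [hna₀]; linarith) 2 (by norm_num)
      have he : (n:ℝ) * a₀^2/2 = 2*L := by rw [hna₀]; ring
      rw [he] at this
      refine this.trans ?_
      have ha₀ϖ : a₀ ≤ ϖ := div_le_self hϖ0 hbar1.le
      gcongr
    have part2 : (∑ l ∈ range (n+1), (if ϖ ≤ |X l| then 0 else W l * β^2)) ≤ β^2 := by
      have step : (∑ l ∈ range (n+1), (if ϖ ≤ |X l| then 0 else W l * β^2))
          ≤ ∑ l ∈ range (n+1), W l * β^2 := by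
        apply Finset.sum_le_sum
        intro l _
        split_ifs with h
        · exact mul_nonneg (hWn l) (by positivity)
        · exact le_refl _
      refine step.trans ?_
      rw [← Finset.sum_mul, hWs, one_mul]
    linarith only [part1, part2]
  · rw [if_neg hcase]
    have part1 : (∑ l ∈ range (n+1), (if ϖ ≤ |X l| then W l * |X l - β|^2 else 0))
        ≤ 3*ϖ^2 := by
      have step : (∑ l ∈ range (n+1), (if ϖ ≤ |X l| then W l * |X l - β|^2 else 0))
          ≤ (∑ l ∈ range (n+1), (if ϖ ≤ |X l - β| then W l * |X l - β| ^ 2 else 0))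
            + ∑ l ∈ range (n+1), ϖ^2 * W l := by
        rw [← Finset.sum_add_distrib]
        apply Finset.sum_le_sum
        intro l _
        have hWl := hWn l
        have t2 : 0 ≤ ϖ^2 * W l := by positivity
        by_cases h : ϖ ≤ |X l|
        · rw [if_pos h]
          by_cases h2 : ϖ ≤ |X l - β|
          · rw [if_pos h2]; linarith
          · rw [if_neg h2]
            push_neg at h2
            have habs2 : |X l - β|^2 ≤ ϖ^2 := by
              apply pow_le_pow_left₀ (abs_nonneg _) h2.le
            have : W l * |X l - β|^2 ≤ ϖ^2 * W l := by
              rw [mul_comm (ϖ^2) (W l)]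
              exact mul_le_mul_of_nonneg_left habs2 hWl
            linarith
        · rw [if_neg h]
          have t1 : (0:ℝ) ≤ (if ϖ ≤ |X l - β| then W l * |X l - β| ^ 2 else 0) := by
            split_ifs
            · exact mul_nonneg (hWn l) (by positivity)
            · exact le_refl 0
          linarith
      refine step.trans ?_
      have t1 := habs_tail ϖ hϖpos (by linarith) 2 (by norm_num)
      have t2 : ∑ l ∈ range (n+1), ϖ^2 * W l = ϖ^2 := by
        rw [← Finset.mul_sum, hWs, mul_one]
      have hexple : exp (-((n:ℝ)*ϖ^2/2)) ≤ 1 := by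
        rw [Real.exp_le_one_iff]
        have : (0:ℝ) ≤ (n:ℝ)*ϖ^2/2 := by positivity
        linarith
      have hb : 2 * ϖ^2 * exp (-((n:ℝ)*ϖ^2/2)) ≤ 2 * ϖ^2 * 1 :=
        mul_le_mul_of_nonneg_left hexple (by positivity)
      rw [t2]
      linarith only [t1, hb]
    have part2 : (∑ l ∈ range (n+1), (if ϖ ≤ |X l| then 0 else W l * β^2)) ≤ 4*ϖ^2 := by
      by_cases hbig : |β| ≤ 2*ϖ
      · have hβ2 : β^2 ≤ 4*ϖ^2 := by
          have := pow_le_pow_left₀ (abs_nonneg β) hbig 2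
          rw [sq_abs] at this
          nlinarith [this]
        have step : (∑ l ∈ range (n+1), (if ϖ ≤ |X l| then 0 else W l * β^2))
            ≤ ∑ l ∈ range (n+1), W l * (4*ϖ^2) := by
          apply Finset.sum_le_sum
          intro l _
          have hWl := hWn l
          split_ifs with h
          · exact mul_nonneg hWl (by positivity)
          · exact mul_le_mul_of_nonneg_left hβ2 hWl
        refine step.trans ?_
        rw [← Finset.sum_mul, hWs, one_mul]
      · push_neg at hbig
        set am : ℝ := |β| - ϖ with ham
        have ham0 : 0 < am := by rw [ham]; linarith
        have hamϖ : ϖ ≤ am := by rw [ham]; linarith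
        have ham2 : ϖ^2 ≤ am^2 := pow_le_pow_left₀ hϖ0 hamϖ 2
        have hnam : 2 ≤ (n:ℝ) * am^2 := by
          have := mul_le_mul_of_nonneg_left ham2 hn0.le
          linarith
        have step : (∑ l ∈ range (n+1), (if ϖ ≤ |X l| then 0 else W l * β^2))
            ≤ β^2 * ∑ l ∈ range (n+1), (if am ≤ |X l - β| then W l * |X l - β| ^ 0 else 0) := by
          rw [Finset.mul_sum]
          apply Finset.sum_le_sum
          intro l _
          have hWl := hWn l
          by_cases h : ϖ ≤ |X l|
          · rw [if_pos h]
            have hnn : (0:ℝ) ≤ (if am ≤ |X l - β| then W l * |X l - β| ^ 0 else 0) := by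
              split_ifs
              · exact mul_nonneg hWl (by positivity)
              · exact le_refl 0
            exact mul_nonneg (by positivity) hnn
          · rw [if_neg h]
            push_neg at h
            have h5 := abs_sub_abs_le_abs_sub β (X l)
            have habsy : |β - X l| = |X l - β| := abs_sub_comm β (X l)
            rw [habsy] at h5
            have hyl : am ≤ |X l - β| := by rw [ham]; linarith
            rw [if_pos hyl, pow_zero, mul_one, mul_comm (W l) (β^2)]
        refine step.trans ?_
        have t0 := habs_tail am ham0 hnam 0 (by norm_num)
        have hmul : β^2 * (∑ l ∈ range (n+1), (if am ≤ |X l - β| then W l * |X l - β| ^ 0 else 0))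
            ≤ β^2 * (2 * am ^ 0 * exp (-((n:ℝ) * am^2/2))) := by
          apply mul_le_mul_of_nonneg_left t0 (by positivity)
        refine hmul.trans ?_
        rw [pow_zero, mul_one]
        have hexp1 : exp (-((n:ℝ) * am^2/2)) ≤ exp (-((n:ℝ) * β^2/8)) := by
          apply Real.exp_le_exp.mpr
          have h1 : |β|/2 ≤ am := by rw [ham]; linarith
          have h2 : (|β|/2)^2 ≤ am^2 := pow_le_pow_left₀ (by positivity) h1 2
          have h3 : β^2/4 ≤ am^2 := by
            have e : (|β|/2)^2 = β^2/4 := by rw [div_pow, sq_abs]; norm_num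
            linarith [e ▸ h2]
          have := mul_le_mul_of_nonneg_left h3 hn0.le
          linarith
        set u : ℝ := Real.sqrt n * |β| with hu
        have hu0 : 0 ≤ u := by positivity
        have hu2 : u^2 = (n:ℝ) * β^2 := by
          rw [hu, mul_pow, Real.sq_sqrt hn0.le, sq_abs]
        have hquad : u^2 * exp (-(u^2/8)) ≤ 8 := aux_exp_quad2 u
        have hβe : β^2 * exp (-((n:ℝ)*β^2/8)) ≤ 8 / n := by
          rw [le_div_iff₀ hn0]
          calc β^2 * exp (-((n:ℝ)*β^2/8)) * n
              = u^2 * exp (-(u^2/8)) := by rw [hu2]; ring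
          _ ≤ 8 := hquad
        have h8n : 8 / (n:ℝ) ≤ 2*ϖ^2 := by
          rw [div_le_iff₀ hn0]
          linarith only [hnϖ]
        calc β^2 * (2 * exp (-((n:ℝ) * am^2/2)))
            ≤ β^2 * (2 * exp (-((n:ℝ) * β^2/8))) := by
              apply mul_le_mul_of_nonneg_left _ (by positivity : (0:ℝ) ≤ β^2)
              linarith only [hexp1]
        _ = 2 * (β^2 * exp (-((n:ℝ) * β^2/8))) := by ring
        _ ≤ 2 * (8 / n) := by linarith only [hβe]
        _ = 16 / n := by ring
        _ ≤ 4*ϖ^2 := by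
              rw [div_le_iff₀ hn0]
              linarith only [hnϖ]
    linarith only [part1, part2]

end PerJ

end AuxLemmas

/-- key risk bounds for the hard-threshold estimates of the Pauli
coefficients.  Fix `0 ≤ q < 1`, `ħ > 1`, `c₀ > 0`, `c₁ < 1`.  There are constants
`C₁, C₂ > 0` and `n₀` such that for all `n ≥ n₀` and `d = 2^b` with
`n^{c₀} ≤ d ≤ exp(n^{c₁})`: whenever `β_j ∈ [−1,1]` (indexed by the `d² − 1`
non-identity Pauli multi-indices) satisfy the sparsity condition
`Σ_j |β_j|^q ≤ π_n(d)`, and `N_j` are independent with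
`n(N_j + 1)/2 ~ Binomial(n, (1+β_j)/2)`, the hard-threshold estimates
`β̂_j = N_j·1(|N_j| ≥ ϖ)` with `ϖ = ħ√((4/n) log d)` satisfy
`Σ_j E|β̂_j − β_j| ≤ C₁ π_n(d) ϖ^{1−q}` and
`Σ_j E[(β̂_j − β_j)²] ≤ C₂ π_n(d) ϖ^{2−q}`. -/
theorem hard_threshold_coefficient_risk_bounds
    (q hbar c₀ c₁ : ℝ) (hq0 : 0 ≤ q) (hq1 : q < 1) (hhbar : 1 < hbar)
    (hc₀ : 0 < c₀) (hc₁ : c₁ < 1) :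
    ∃ C₁ C₂ : ℝ, 0 < C₁ ∧ 0 < C₂ ∧ ∃ n₀ : ℕ, ∀ n : ℕ, n₀ ≤ n →
    ∀ b : ℕ, 1 ≤ b → ((n : ℝ) ^ c₀ ≤ (2 : ℝ) ^ b) →
      ((2 : ℝ) ^ b ≤ Real.exp ((n : ℝ) ^ c₁)) →
    ∀ π : ℝ, 1 ≤ π →
    ∀ β : {ℓ : Fin b → Fin 4 // ℓ ≠ fun _ => 0} → ℝ,
      (∀ j, |β j| ≤ 1) →
      (∑ j, (if β j = 0 then (0 : ℝ) else |β j| ^ q)) ≤ π →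
    ∀ (Ω : Type) (_ : MeasureSpace Ω), IsProbabilityMeasure (volume : Measure Ω) →
    ∀ N : {ℓ : Fin b → Fin 4 // ℓ ≠ fun _ => 0} → Ω → ℝ,
      (∀ j, Measurable (N j)) →
      iIndepFun N (volume : Measure Ω) →
      (∀ j, Measure.map (N j) (volume : Measure Ω) = binAvgLaw n ((1 + β j) / 2)) →
    (∑ j, ∫ ω, |(if hbar * Real.sqrt (4 / n * Real.log (2 ^ b)) ≤ |N j ω|
          then N j ω else 0) - β j|)
      ≤ C₁ * π * (hbar * Real.sqrt (4 / n * Real.log (2 ^ b))) ^ (1 - q) ∧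
    (∑ j, ∫ ω, ((if hbar * Real.sqrt (4 / n * Real.log (2 ^ b)) ≤ |N j ω|
          then N j ω else 0) - β j) ^ 2)
      ≤ C₂ * π * (hbar * Real.sqrt (4 / n * Real.log (2 ^ b))) ^ (2 - q) := by
  have hbar0 : (0:ℝ) < hbar := by linarith
  have hr0 : (0:ℝ) < 1 - 1/hbar := by
    have h : 1/hbar < 1 := by rw [div_lt_one hbar0]; exact hhbar
    linarith
  have hKpos : (0:ℝ) < (1 - 1/hbar) ^ (-q) := Real.rpow_pos_of_pos hr0 (-q)
  refine ⟨5 * (1 - 1/hbar) ^ (-q) + 2, 7 * (1 - 1/hbar) ^ (-q) + 2,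
    by positivity, by positivity, ?_⟩
  have t1 : Filter.Tendsto (fun n : ℕ => c₀ * Real.log n) Filter.atTop Filter.atTop :=
    (Real.tendsto_log_atTop.const_mul_atTop hc₀).comp tendsto_natCast_atTop_atTop
  have t2 : Filter.Tendsto (fun n : ℕ => (n:ℝ) ^ (1 - c₁)) Filter.atTop Filter.atTop :=
    (tendsto_rpow_atTop (by linarith : (0:ℝ) < 1 - c₁)).comp tendsto_natCast_atTop_atTop
  have hev : ∀ᶠ n : ℕ in Filter.atTop,
      (1 ≤ c₀ * Real.log n ∧ 4 * hbar^2 ≤ (n:ℝ) ^ (1 - c₁)) ∧ 1 ≤ n :=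
    ((t1.eventually_ge_atTop 1).and (t2.eventually_ge_atTop (4 * hbar^2))).and
      (Filter.eventually_ge_atTop 1)
  obtain ⟨n₀, hn₀⟩ := Filter.eventually_atTop.mp hev
  refine ⟨n₀, ?_⟩
  intro n hnn₀ b hb hlow hupp π hπ β hβ1 hβs Ω mΩ hprob N hNmeas hindep hlaw
  obtain ⟨⟨hlog1, hpow⟩, hn1⟩ := hn₀ n hnn₀
  have hn0 : (0:ℝ) < n := by exact_mod_cast hn1
  set d : ℝ := (2:ℝ) ^ b with hd
  have hd0 : 0 < d := by rw [hd]; positivity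
  set L : ℝ := Real.log d with hLdef
  set ϖ : ℝ := hbar * Real.sqrt (4 / n * L) with hϖdef
  have hL1 : 1 ≤ L := by
    have h1 : Real.log ((n:ℝ) ^ c₀) ≤ Real.log d := Real.log_le_log (by positivity) hlow
    rw [Real.log_rpow hn0] at h1
    linarith [hlog1]
  have hLn : L ≤ (n:ℝ) ^ c₁ := by
    have h1 : Real.log d ≤ Real.log (Real.exp ((n:ℝ)^c₁)) := Real.log_le_log hd0 hupp
    rwa [Real.log_exp] at h1
  have hϖ0 : 0 ≤ ϖ := by rw [hϖdef]; positivity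
  have hsqnn : (0:ℝ) ≤ 4 / n * L := by positivity
  have hϖsq : ϖ^2 * n = 4 * hbar^2 * L := by
    rw [hϖdef, mul_pow, Real.sq_sqrt hsqnn]
    field_simp
  have hϖpos : 0 < ϖ := by
    rcases lt_or_eq_of_le hϖ0 with h | h
    · exact h
    · exfalso
      rw [← h] at hϖsq
      have h0 : (0:ℝ)^2 * n = 0 := by ring
      rw [h0] at hϖsq
      have hgt : (0:ℝ) < 4*hbar^2*L := by positivity
      linarith
  have hϖ1 : ϖ ≤ 1 := by
    have h1 : 4 * hbar^2 * L ≤ 4 * hbar^2 * (n:ℝ)^c₁ :=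
      mul_le_mul_of_nonneg_left hLn (by positivity)
    have h2 : 4 * hbar^2 * (n:ℝ)^c₁ ≤ (n:ℝ)^(1-c₁) * (n:ℝ)^c₁ :=
      mul_le_mul_of_nonneg_right hpow (Real.rpow_nonneg hn0.le c₁)
    have h3 : (n:ℝ)^(1-c₁) * (n:ℝ)^c₁ = n := by
      rw [← Real.rpow_add hn0]; norm_num
    have h4 : ϖ^2 * n ≤ 1 * n := by rw [hϖsq]; linarith
    have h5 : ϖ^2 ≤ 1 := le_of_mul_le_mul_right (by linarith) hn0
    by_contra hcon
    push_neg at hcon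
    have h6 : 1*1 < ϖ*ϖ := mul_lt_mul'' hcon hcon (by norm_num) (by norm_num)
    have h7 : ϖ^2 = ϖ*ϖ := pow_two ϖ
    linarith
  have hexpL : Real.exp L = d := Real.exp_log hd0
  have hE : Real.exp (-(2*L)) = (d^2)⁻¹ := by
    rw [show -(2*L) = -(L+L) by ring, Real.exp_neg, Real.exp_add, hexpL, sq]
  have hcard : ((Fintype.card {ℓ : Fin b → Fin 4 // ℓ ≠ fun _ => 0}) : ℝ) ≤ d^2 := by
    have h1 : Fintype.card {ℓ : Fin b → Fin 4 // ℓ ≠ fun _ => 0}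
        ≤ Fintype.card (Fin b → Fin 4) := Fintype.card_subtype_le _
    have h2 : Fintype.card (Fin b → Fin 4) = 4 ^ b := by
      rw [Fintype.card_fun]; simp
    have h3 : ((4:ℝ)) ^ b = d ^ 2 := by
      rw [hd, show (4:ℝ) = 2^2 by norm_num, ← pow_mul, ← pow_mul, mul_comm]
    calc ((Fintype.card {ℓ : Fin b → Fin 4 // ℓ ≠ fun _ => 0}) : ℝ)
        ≤ (Fintype.card (Fin b → Fin 4) : ℝ) := by exact_mod_cast h1
    _ = ((4:ℝ)) ^ b := by rw [h2]; push_cast; ring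
    _ = d ^ 2 := h3
  have hp0 : ∀ j, (0:ℝ) ≤ (1 + β j)/2 := fun j => by
    rcases abs_le.mp (hβ1 j) with ⟨h1, h2⟩; linarith
  have hp1 : ∀ j, (1 + β j)/2 ≤ 1 := fun j => by
    rcases abs_le.mp (hβ1 j) with ⟨h1, h2⟩; linarith
  have hsetm : MeasurableSet {x : ℝ | ϖ ≤ |x|} :=
    measurableSet_le measurable_const measurable_abs
  have hϖP : (0:ℝ) ≤ ϖ ^ (1-q) := Real.rpow_nonneg hϖ0 _
  have hϖP2 : (0:ℝ) ≤ ϖ ^ (2-q) := Real.rpow_nonneg hϖ0 _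
  constructor
  · -- first moment
    have hstep : ∀ j, (∫ ω, |(if ϖ ≤ |N j ω| then N j ω else 0) - β j|)
        ≤ (5 * (1 - 1/hbar) ^ (-q)) * (if β j = 0 then (0:ℝ) else |β j| ^ q) * ϖ ^ (1-q)
          + 2*ϖ*Real.exp (-(2*L)) := by
      intro j
      have hfm : Measurable (fun x : ℝ => |(if ϖ ≤ |x| then x else 0) - β j|) :=
        ((Measurable.ite hsetm measurable_id measurable_const).sub measurable_const).abs
      have hconv : (∫ ω, |(if ϖ ≤ |N j ω| then N j ω else 0) - β j|)
          = ∑ l ∈ Finset.range (n+1), binW n l ((1 + β j)/2) *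
              |(if ϖ ≤ |2 * (l:ℝ) / n - 1| then 2 * (l:ℝ) / n - 1 else 0) - β j| := by
        calc (∫ ω, |(if ϖ ≤ |N j ω| then N j ω else 0) - β j|)
            = ∫ x, |(if ϖ ≤ |x| then x else 0) - β j| ∂(Measure.map (N j) volume) :=
              (MeasureTheory.integral_map (hNmeas j).aemeasurable
                hfm.aestronglyMeasurable).symm
        _ = ∫ x, |(if ϖ ≤ |x| then x else 0) - β j| ∂(binAvgLaw n ((1 + β j)/2)) := by
              rw [hlaw j]
        _ = _ := integral_binAvgLaw n (hp0 j) (hp1 j) _ hfm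
      rw [hconv]
      exact (perj_one hn1 (hβ1 j) hhbar hL1 hϖ0 hϖ1 hϖsq).trans
        (unif_bound1 q hbar (β j) ϖ L hq0 hq1 hhbar hϖpos hϖ1)
    have hsum := Finset.sum_le_sum (fun j (_ : j ∈ Finset.univ) => hstep j)
    refine le_trans hsum ?_
    have heq : ∑ j, ((5 * (1 - 1/hbar) ^ (-q)) * (if β j = 0 then (0:ℝ) else |β j| ^ q)
            * ϖ ^ (1-q) + 2*ϖ*Real.exp (-(2*L)))
        = ((5 * (1 - 1/hbar) ^ (-q)) * ϖ ^ (1-q))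
            * (∑ j, (if β j = 0 then (0:ℝ) else |β j| ^ q))
          + ((Fintype.card {ℓ : Fin b → Fin 4 // ℓ ≠ fun _ => 0}) : ℝ)
            * (2*ϖ*Real.exp (-(2*L))) := by
      rw [Finset.sum_add_distrib, Finset.sum_const, Finset.card_univ, nsmul_eq_mul]
      congr 1
      rw [Finset.mul_sum]
      exact Finset.sum_congr rfl (fun j _ => by ring)
    rw [heq]
    have hS : ((5 * (1 - 1/hbar) ^ (-q)) * ϖ ^ (1-q))
          * (∑ j, (if β j = 0 then (0:ℝ) else |β j| ^ q))
        ≤ ((5 * (1 - 1/hbar) ^ (-q)) * ϖ ^ (1-q)) * π :=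
      mul_le_mul_of_nonneg_left hβs (by positivity)
    have hcB : ((Fintype.card {ℓ : Fin b → Fin 4 // ℓ ≠ fun _ => 0}) : ℝ)
          * (2*ϖ*Real.exp (-(2*L))) ≤ 2*ϖ := by
      rw [hE]
      have h1 : ((Fintype.card {ℓ : Fin b → Fin 4 // ℓ ≠ fun _ => 0}) : ℝ) * (2*ϖ*(d^2)⁻¹)
          ≤ d^2 * (2*ϖ*(d^2)⁻¹) := mul_le_mul_of_nonneg_right hcard (by positivity)
      have h2 : d^2 * (2*ϖ*(d^2)⁻¹) = 2*ϖ := by field_simp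
      linarith
    have hϖle : ϖ ≤ ϖ ^ (1-q) := by
      have h := Real.rpow_le_rpow_of_exponent_ge hϖpos hϖ1 (by linarith : 1-q ≤ (1:ℝ))
      rwa [Real.rpow_one] at h
    have h2ϖ : 2*ϖ ≤ 2*π*ϖ^(1-q) := by
      have hb := mul_le_mul_of_nonneg_right hπ hϖP
      linarith
    calc ((5 * (1 - 1/hbar) ^ (-q)) * ϖ ^ (1-q))
            * (∑ j, (if β j = 0 then (0:ℝ) else |β j| ^ q))
          + ((Fintype.card {ℓ : Fin b → Fin 4 // ℓ ≠ fun _ => 0}) : ℝ)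
            * (2*ϖ*Real.exp (-(2*L)))
        ≤ ((5 * (1 - 1/hbar) ^ (-q)) * ϖ ^ (1-q)) * π + 2*ϖ := by linarith
    _ ≤ ((5 * (1 - 1/hbar) ^ (-q)) * ϖ ^ (1-q)) * π + 2*π*ϖ^(1-q) := by linarith
    _ = (5 * (1 - 1/hbar) ^ (-q) + 2) * π * ϖ ^ (1-q) := by ring
  · -- second moment
    have hstep : ∀ j, (∫ ω, ((if ϖ ≤ |N j ω| then N j ω else 0) - β j)^2)
        ≤ (7 * (1 - 1/hbar) ^ (-q)) * (if β j = 0 then (0:ℝ) else |β j| ^ q) * ϖ ^ (2-q)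
          + 2*ϖ^2*Real.exp (-(2*L)) := by
      intro j
      have hfm : Measurable (fun x : ℝ => ((if ϖ ≤ |x| then x else 0) - β j)^2) :=
        ((Measurable.ite hsetm measurable_id measurable_const).sub measurable_const).pow_const 2
      have hconv : (∫ ω, ((if ϖ ≤ |N j ω| then N j ω else 0) - β j)^2)
          = ∑ l ∈ Finset.range (n+1), binW n l ((1 + β j)/2) *
              ((if ϖ ≤ |2 * (l:ℝ) / n - 1| then 2 * (l:ℝ) / n - 1 else 0) - β j)^2 := by
        calc (∫ ω, ((if ϖ ≤ |N j ω| then N j ω else 0) - β j)^2)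
            = ∫ x, ((if ϖ ≤ |x| then x else 0) - β j)^2 ∂(Measure.map (N j) volume) :=
              (MeasureTheory.integral_map (hNmeas j).aemeasurable
                hfm.aestronglyMeasurable).symm
        _ = ∫ x, ((if ϖ ≤ |x| then x else 0) - β j)^2 ∂(binAvgLaw n ((1 + β j)/2)) := by
              rw [hlaw j]
        _ = _ := integral_binAvgLaw n (hp0 j) (hp1 j) _ hfm
      rw [hconv]
      exact (perj_two hn1 (hβ1 j) hhbar hL1 hϖ0 hϖ1 hϖsq).trans
        (unif_bound2 q hbar (β j) ϖ L hq0 hq1 hhbar hϖpos hϖ1)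
    have hsum := Finset.sum_le_sum (fun j (_ : j ∈ Finset.univ) => hstep j)
    refine le_trans hsum ?_
    have heq : ∑ j, ((7 * (1 - 1/hbar) ^ (-q)) * (if β j = 0 then (0:ℝ) else |β j| ^ q)
            * ϖ ^ (2-q) + 2*ϖ^2*Real.exp (-(2*L)))
        = ((7 * (1 - 1/hbar) ^ (-q)) * ϖ ^ (2-q))
            * (∑ j, (if β j = 0 then (0:ℝ) else |β j| ^ q))
          + ((Fintype.card {ℓ : Fin b → Fin 4 // ℓ ≠ fun _ => 0}) : ℝ)
            * (2*ϖ^2*Real.exp (-(2*L))) := by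
      rw [Finset.sum_add_distrib, Finset.sum_const, Finset.card_univ, nsmul_eq_mul]
      congr 1
      rw [Finset.mul_sum]
      exact Finset.sum_congr rfl (fun j _ => by ring)
    rw [heq]
    have hS : ((7 * (1 - 1/hbar) ^ (-q)) * ϖ ^ (2-q))
          * (∑ j, (if β j = 0 then (0:ℝ) else |β j| ^ q))
        ≤ ((7 * (1 - 1/hbar) ^ (-q)) * ϖ ^ (2-q)) * π :=
      mul_le_mul_of_nonneg_left hβs (by positivity)
    have hcB : ((Fintype.card {ℓ : Fin b → Fin 4 // ℓ ≠ fun _ => 0}) : ℝ)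
          * (2*ϖ^2*Real.exp (-(2*L))) ≤ 2*ϖ^2 := by
      rw [hE]
      have h1 : ((Fintype.card {ℓ : Fin b → Fin 4 // ℓ ≠ fun _ => 0}) : ℝ) * (2*ϖ^2*(d^2)⁻¹)
          ≤ d^2 * (2*ϖ^2*(d^2)⁻¹) := mul_le_mul_of_nonneg_right hcard (by positivity)
      have h2 : d^2 * (2*ϖ^2*(d^2)⁻¹) = 2*ϖ^2 := by field_simp
      linarith
    have hϖle : ϖ^2 ≤ ϖ ^ (2-q) := by
      have h := Real.rpow_le_rpow_of_exponent_ge hϖpos hϖ1 (by linarith : 2-q ≤ (2:ℝ))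
      rwa [show ((2:ℝ)) = ((2:ℕ):ℝ) by norm_num, Real.rpow_natCast] at h
    have h2ϖ : 2*ϖ^2 ≤ 2*π*ϖ^(2-q) := by
      have hb := mul_le_mul_of_nonneg_right hπ hϖP2
      linarith
    calc ((7 * (1 - 1/hbar) ^ (-q)) * ϖ ^ (2-q))
            * (∑ j, (if β j = 0 then (0:ℝ) else |β j| ^ q))
          + ((Fintype.card {ℓ : Fin b → Fin 4 // ℓ ≠ fun _ => 0}) : ℝ)
            * (2*ϖ^2*Real.exp (-(2*L)))
        ≤ ((7 * (1 - 1/hbar) ^ (-q)) * ϖ ^ (2-q)) * π + 2*ϖ^2 := by linarith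
    _ ≤ ((7 * (1 - 1/hbar) ^ (-q)) * ϖ ^ (2-q)) * π + 2*π*ϖ^(2-q) := by linarith
    _ = (7 * (1 - 1/hbar) ^ (-q) + 2) * π * ϖ ^ (2-q) := by ring
end

section
/- Let d, K, j be positive integers with 1 ≤ j ≤ K and 2K ≤ d − 1. Then C(K, j) · C(d−1−K, K−j) / C(d−1, K) ≤ ( K² / (d − K) )^j, where C(m, r) denotes the binomial coefficient. -/
lemma choose_ratio_aux (j : ℕ) : ∀ K n : ℕ, j ≤ K → K ≤ n →
    (n - j).choose (K - j) * (n - K + 1) ^ j ≤ n.choose K * K ^ j := by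
  induction j with
  | zero => simp
  | succ j ih =>
    intro K n hjK hKn
    have hK1 : 1 ≤ K := le_trans (by omega) hjK
    have hn1 : 1 ≤ n := hK1.trans hKn
    have ih' := ih (K - 1) (n - 1) (by omega) (by omega)
    have e : (n - 1) - (K - 1) = n - K := by omega
    rw [e] at ih'
    have e2 : n - (j + 1) = (n - 1) - j := by omega
    have e3 : K - (j + 1) = (K - 1) - j := by omega
    rw [e2, e3, pow_succ, pow_succ, ← mul_assoc]
    have key : (n - 1).choose (K - 1) * (n - K + 1) ≤ n.choose K * K := by
      have h := Nat.add_one_mul_choose_eq (n - 1) (K - 1)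
      have hn : n - 1 + 1 = n := by omega
      have hk : K - 1 + 1 = K := by omega
      simp only [Nat.succ_eq_add_one, hn, hk] at h
      calc (n - 1).choose (K - 1) * (n - K + 1)
          ≤ (n - 1).choose (K - 1) * n := Nat.mul_le_mul_left _ (by omega)
        _ = n * (n - 1).choose (K - 1) := Nat.mul_comm _ _
        _ = n.choose K * K := h
    calc (n - 1 - j).choose (K - 1 - j) * (n - K + 1) ^ j * (n - K + 1)
        ≤ (n - 1).choose (K - 1) * (K - 1) ^ j * (n - K + 1) :=
          Nat.mul_le_mul_right _ ih'
      _ ≤ (n - 1).choose (K - 1) * K ^ j * (n - K + 1) :=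
          Nat.mul_le_mul_right _
            (Nat.mul_le_mul_left _ (Nat.pow_le_pow_left (Nat.sub_le K 1) j))
      _ = (n - 1).choose (K - 1) * (n - K + 1) * K ^ j := by ring
      _ ≤ n.choose K * K * K ^ j := Nat.mul_le_mul_right _ key
      _ = n.choose K * K ^ j * K := by ring
      _ = n.choose K * (K ^ j * K) := by ring

/-- hypergeometric ratio bound used in the Le Cam lower-bound
argument. For positive integers `d, K, j` with `1 ≤ j ≤ K` and `2K ≤ d − 1`,
`C(K, j) · C(d−1−K, K−j) / C(d−1, K) ≤ (K² / (d − K))^j`. -/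
theorem choose_ratio_le (d K j : ℕ) (hj1 : 1 ≤ j) (hjK : j ≤ K)
    (hKd : 2 * K ≤ d - 1) :
    ((K.choose j : ℝ) * ((d - 1 - K).choose (K - j) : ℝ)) / ((d - 1).choose K : ℝ)
      ≤ ((K : ℝ) ^ 2 / ((d : ℝ) - (K : ℝ))) ^ j := by
  set n := d - 1 with hn
  have hKn : K ≤ n := by omega
  have hd : 2 ≤ d := by omega
  -- natural number inequality
  have hnat : (n - K).choose (K - j) * (d - K) ^ j ≤ n.choose K * K ^ j := by
    have h1 : (n - K).choose (K - j) ≤ (n - j).choose (K - j) :=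
      Nat.choose_le_choose _ (by omega)
    have h2 := choose_ratio_aux j K n hjK hKn
    have e : n - K + 1 = d - K := by omega
    rw [e] at h2
    exact le_trans (Nat.mul_le_mul_right _ h1) h2
  have hmain : (K.choose j) * ((n - K).choose (K - j)) * (d - K) ^ j
      ≤ K ^ (2 * j) * n.choose K := by
    calc K.choose j * ((n - K).choose (K - j)) * (d - K) ^ j
        = K.choose j * ((n - K).choose (K - j) * (d - K) ^ j) := by ring
      _ ≤ K ^ j * (n.choose K * K ^ j) :=
          Nat.mul_le_mul (Nat.choose_le_pow K j) hnat
      _ = K ^ (2 * j) * n.choose K := by rw [two_mul, pow_add]; ring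
  -- move to ℝ
  have hc : (0 : ℝ) < n.choose K := by
    exact_mod_cast Nat.choose_pos hKn
  have hx : (0 : ℝ) < (d : ℝ) - (K : ℝ) := by
    have : K < d := by omega
    have := Nat.cast_lt (α := ℝ).2 this
    linarith
  have hdK : ((d - K : ℕ) : ℝ) = (d : ℝ) - (K : ℝ) := by
    have : K ≤ d := by omega
    push_cast [this]
    ring
  rw [div_pow, div_le_div_iff₀ hc (pow_pos hx j)]
  have := (Nat.cast_le (α := ℝ)).2 hmain
  push_cast at this
  calc (K.choose j : ℝ) * ((n - K).choose (K - j)) * ((d : ℝ) - K) ^ j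
      = (K.choose j : ℝ) * ((n - K).choose (K - j)) * (((d - K : ℕ) : ℝ)) ^ j := by
        rw [hdK]
    _ ≤ (K : ℝ) ^ (2 * j) * n.choose K := by push_cast; exact this
    _ = ((K : ℝ) ^ 2) ^ j * n.choose K := by rw [← pow_mul]
end
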